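/- Let f be a dynamic function on I such that f(t)(·) is a bounded function on J for every t ∈ I, and such that the one-sided limits f(τ+) and f(τ−) (in the uniform sense defined below) exist at every point τ ∈ I. Then the set of points t ∈ I at which f does not have an ordinary value (i.e., at which f(t)(·) is not constant on J) is at most countable. -/

import Mathlib

open Set Filter Topology MeasureTheory

noncomputable section

/-- `J = [-1/2, 1/2]`. -/
def Jset : Set ℝ := Set.Icc (-(1:ℝ)/2) (1/2)

/-- A dynamic function `f` on `I = (a,b)` tends to `c` from the right at `τ`
(uniformly in `s ∈ J`). -/
def RightLim (a b : ℝ) (f : ℝ → ℝ → ℝ) (τ c : ℝ) : Prop :=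
  ∀ ε > 0, ∃ η > 0, ∀ t ∈ Set.Ioo a b, t ∈ Set.Ioo τ (τ + η) → ∀ s ∈ Jset, |f t s - c| < ε

/-- A dynamic function `f` on `I = (a,b)` tends to `c` from the left at `τ`
(uniformly in `s ∈ J`). -/
def LeftLim (a b : ℝ) (f : ℝ → ℝ → ℝ) (τ c : ℝ) : Prop :=
  ∀ ε > 0, ∃ η > 0, ∀ t ∈ Set.Ioo a b, t ∈ Set.Ioo (τ - η) τ → ∀ s ∈ Jset, |f t s - c| < ε

/-- `f` is bounded on `I × J`. -/
def BddOn (a b : ℝ) (f : ℝ → ℝ → ℝ) : Prop :=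
  ∃ M, ∀ t ∈ Set.Ioo a b, ∀ s ∈ Jset, |f t s| ≤ M

/-- The one-sided uniform limits of `f` exist at every point of `I = (a,b)`. -/
def HasSidedLimits (a b : ℝ) (f : ℝ → ℝ → ℝ) : Prop :=
  ∀ τ ∈ Set.Ioo a b, (∃ c, RightLim a b f τ c) ∧ (∃ c, LeftLim a b f τ c)

/-- The support of the dynamic function `f` is contained in the compact
interval `[c,d] ⊂ (a,b)`. -/
def SuppIn (a b : ℝ) (f : ℝ → ℝ → ℝ) (c d : ℝ) : Prop :=
  a < c ∧ c ≤ d ∧ d < b ∧ ∀ t ∉ Set.Icc c d, ∀ s ∈ Jset, f t s = 0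

/-- `φ` is a dynamic test function on `I = (a,b)`. -/
def IsDynTest (a b : ℝ) (φ : ℝ → ℝ → ℝ) : Prop :=
  BddOn a b φ ∧ HasSidedLimits a b φ ∧ ∃ c d, SuppIn a b φ c d

/-- Convergence of a sequence of dynamic test functions in the space `𝒯`:
common compact support in `I` and uniform convergence on `I × J`. -/
def TendstoT (a b : ℝ) (φn : ℕ → ℝ → ℝ → ℝ) (φ : ℝ → ℝ → ℝ) : Prop :=
  (∃ c d, a < c ∧ c ≤ d ∧ d < b ∧ ∀ n, ∀ t ∉ Set.Icc c d, ∀ s ∈ Jset, φn n t s = 0) ∧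
  ∀ ε > 0, ∃ N, ∀ n ≥ N, ∀ t ∈ Set.Ioo a b, ∀ s ∈ Jset, |φn n t s - φ t s| < ε

/-- A functional on dynamic functions is `𝒯`-sequentially continuous. -/
def SeqContT (a b : ℝ) (F : (ℝ → ℝ → ℝ) → ℝ) : Prop :=
  ∀ (φn : ℕ → ℝ → ℝ → ℝ) (φ : ℝ → ℝ → ℝ),
    (∀ n, IsDynTest a b (φn n)) → IsDynTest a b φ → TendstoT a b φn φ →
      Filter.Tendsto (fun n => F (φn n)) Filter.atTop (nhds (F φ))

/-- A set of reals each point of which is isolated by a rational interval is countable. -/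
lemma aux_countable_sep (S : Set ℝ)
    (h : ∀ τ ∈ S, ∃ q r : ℚ, (q : ℝ) < τ ∧ τ < r ∧
      ∀ t ∈ S, (q : ℝ) < t → t < r → t = τ) :
    S.Countable := by
  rw [← Set.countable_coe_iff]
  choose q r hq hr key using fun τ : S => h τ τ.2
  have hinj : Function.Injective (fun τ : S => (q τ, r τ)) := by
    intro τ σ hqr
    simp only [Prod.mk.injEq] at hqr
    have h1 : (q τ : ℝ) < σ := by rw [hqr.1]; exact hq σ
    have h2 : (σ : ℝ) < r τ := by rw [hqr.2]; exact hr σ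
    have := key τ σ σ.2 h1 h2
    exact (Subtype.ext this).symm
  exact hinj.countable

/-- A dynamic function on `I = (a,b)` with bounded dynamic values and
existing one-sided uniform limits at every point of `I` has ordinary (constant-in-`s`)
values outside an at most countable set. -/
theorem stmt_0 (a b : ℝ) (f : ℝ → ℝ → ℝ)
    (hbdd : ∀ t ∈ Set.Ioo a b, ∃ M, ∀ s ∈ Jset, |f t s| ≤ M)
    (hlim : HasSidedLimits a b f) :
    Set.Countable {t ∈ Set.Ioo a b | ¬ ∃ c, ∀ s ∈ Jset, f t s = c} := by
  -- `B n` : points of `I` where the oscillation of `f t` on `J` is at least `1/(n+1)`.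
  set B : ℕ → Set ℝ := fun n =>
    {t ∈ Set.Ioo a b | ∃ s ∈ Jset, ∃ s' ∈ Jset, 1 / (n + 1 : ℝ) ≤ |f t s - f t s'|} with hB
  have hsub : {t ∈ Set.Ioo a b | ¬ ∃ c, ∀ s ∈ Jset, f t s = c} ⊆ ⋃ n, B n := by
    intro t ht
    obtain ⟨htI, htc⟩ := ht
    have h0 : (0 : ℝ) ∈ Jset := by
      constructor <;> norm_num [Jset]
    push_neg at htc
    obtain ⟨s, hs, hne⟩ := htc (f t 0)
    have hpos : 0 < |f t s - f t 0| := abs_pos.mpr (sub_ne_zero.mpr hne)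
    obtain ⟨n, hn⟩ := exists_nat_one_div_lt hpos
    exact Set.mem_iUnion.mpr ⟨n, htI, s, hs, 0, h0, hn.le⟩
  refine Set.Countable.mono hsub (Set.countable_iUnion fun n => ?_)
  apply aux_countable_sep
  intro τ hτ
  obtain ⟨hτI, -⟩ := hτ
  obtain ⟨⟨cR, hcR⟩, ⟨cL, hcL⟩⟩ := hlim τ hτI
  have hε : (0 : ℝ) < 1 / (4 * (n + 1)) := by positivity
  obtain ⟨ηr, hηr, hR⟩ := hcR _ hε
  obtain ⟨ηl, hηl, hL⟩ := hcL _ hε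
  obtain ⟨q, hq1, hq2⟩ := exists_rat_btwn (show τ - ηl < τ by linarith)
  obtain ⟨r, hr1, hr2⟩ := exists_rat_btwn (show τ < τ + ηr by linarith)
  refine ⟨q, r, hq2, hr1, ?_⟩
  rintro t ⟨htI, s, hs, s', hs', hosc⟩ hqt htr
  by_contra hne
  -- `t ≠ τ`, so `t` lies in one of the punctured side intervals, where the
  -- oscillation is `< 1/(2(n+1)) < 1/(n+1)`, contradiction.
  have hsmall : |f t s - f t s'| < 1 / (n + 1 : ℝ) := by
    rcases lt_or_gt_of_ne hne with hlt | hgt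
    · have h1 := hL t htI ⟨by linarith, hlt⟩ s hs
      have h2 := hL t htI ⟨by linarith, hlt⟩ s' hs'
      have := abs_sub_abs_le_abs_sub (f t s - cL) (f t s' - cL)
      have h3 : |f t s - f t s'| ≤ |f t s - cL| + |f t s' - cL| := by
        calc |f t s - f t s'| = |(f t s - cL) - (f t s' - cL)| := by ring_nf
          _ ≤ |f t s - cL| + |f t s' - cL| := abs_sub _ _
      calc |f t s - f t s'| ≤ |f t s - cL| + |f t s' - cL| := h3
        _ < 1 / (4 * (n + 1)) + 1 / (4 * (n + 1)) := by linarith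
        _ < 1 / (n + 1 : ℝ) := by
            rw [← add_div, div_lt_div_iff₀ (by positivity) (by positivity)]
            ring_nf
            nlinarith [ (n : ℝ) + 1 > 0 ]
    · have h1 := hR t htI ⟨hgt, by linarith⟩ s hs
      have h2 := hR t htI ⟨hgt, by linarith⟩ s' hs'
      have h3 : |f t s - f t s'| ≤ |f t s - cR| + |f t s' - cR| := by
        calc |f t s - f t s'| = |(f t s - cR) - (f t s' - cR)| := by ring_nf
          _ ≤ |f t s - cR| + |f t s' - cR| := abs_sub _ _
      calc |f t s - f t s'| ≤ |f t s - cR| + |f t s' - cR| := h3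
        _ < 1 / (4 * (n + 1)) + 1 / (4 * (n + 1)) := by linarith
        _ < 1 / (n + 1 : ℝ) := by
            rw [← add_div, div_lt_div_iff₀ (by positivity) (by positivity)]
            nlinarith [ (n : ℝ) + 1 > 0 ]
  linarith
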